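/- arXiv:1608.06854 — 2 statements merged into one kernel-verified Lean document; each statement's English description precedes it below -/
import Mathlib

section
/- For every ε > 0 there exists a constant C = C(ε) > 0 such that for every positive integer L and every real Y ≥ 1, Σ_{ℓ ≤ Y, ℓ | L^∞} (ℓ / ν(ℓ)²) · (Σ_{d | ℓ} c_ℓ(d) · √d)² ≤ C · Y^ε · τ(L), where the outer sum is over positive integers ℓ ≤ Y all of whose prime factors divide L. -/
/-- The Chebyshev coefficients: `c_{j,n} = C(n, (n+j)/2) - C(n, (n+j)/2 + 1)` when `n - j`
is even, and `c_{j,n} = 0` when `n - j` is odd (note `n - j` and `n + j` have the same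
parity). -/
noncomputable def chebCoeff (j n : ℕ) : ℝ :=
  if (n + j) % 2 = 0 then
    (n.choose ((n + j) / 2) : ℝ) - (n.choose ((n + j) / 2 + 1) : ℝ)
  else 0

/-- For `d ∣ ℓ`, `c_ℓ(d) = ∏_{p ∣ ℓ} c_{v_p(d), v_p(ℓ)}`, where `v_p` is the `p`-adic
valuation. -/
noncomputable def chebCoeffProd (ℓ d : ℕ) : ℝ :=
  ∏ p ∈ ℓ.primeFactors, chebCoeff (d.factorization p) (ℓ.factorization p)

/-- `ν` is the completely multiplicative function with `ν(p) = p + 1` for every prime `p`,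
i.e. `ν(ℓ) = ∏_p (p+1)^{v_p(ℓ)}`. -/
def nuCM (ℓ : ℕ) : ℕ := ∏ p ∈ ℓ.primeFactors, (p + 1) ^ ℓ.factorization p


open Finset

lemma prod_primeFactors_pow_factorization {n d : ℕ} (hn : n ≠ 0) (hd : d ∣ n) :
    ∏ p ∈ n.primeFactors, p ^ d.factorization p = d := by
  have hd0 : d ≠ 0 := fun h => hn (by simpa [h] using hd)
  have h1 : ∏ p ∈ d.primeFactors, p ^ d.factorization p = d := by
    rw [Nat.prod_primeFactors_prod_factorization]
    exact Nat.factorization_prod_pow_eq_self hd0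
  conv_rhs => rw [← h1]
  symm
  apply Finset.prod_subset (Nat.primeFactors_mono hd hn)
  intro p _ hp
  have : d.factorization p = 0 := by
    rwa [← Nat.support_factorization, Finsupp.notMem_support_iff] at hp
  rw [this, pow_zero]

/-- Sum over divisors of a "multiplicative-shaped" function equals a product over primes. -/
lemma sum_divisors_prod (n : ℕ) (hn : n ≠ 0) (g : ℕ → ℕ → ℝ) :
    ∑ d ∈ n.divisors, ∏ p ∈ n.primeFactors, g p (d.factorization p)
      = ∏ p ∈ n.primeFactors, ∑ j ∈ Finset.range (n.factorization p + 1), g p j := by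
  rw [Finset.prod_sum]
  have hprime : ∀ p ∈ n.primeFactors, p.Prime := fun p hp => Nat.prime_of_mem_primeFactors hp
  -- key computation: factorization of the product
  have hfact : ∀ (f : (a : ℕ) → a ∈ n.primeFactors → ℕ) (q : ℕ) (hq : q ∈ n.primeFactors),
      (∏ x ∈ n.primeFactors.attach, (x : ℕ) ^ f x.1 x.2).factorization q = f q hq := by
    intro f q hq
    rw [Nat.factorization_prod (fun x _ => pow_ne_zero _ (hprime x.1 x.2).ne_zero)]
    rw [Finsupp.finset_sum_apply]
    rw [Finset.sum_eq_single (⟨q, hq⟩ : {x // x ∈ n.primeFactors})]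
    · rw [(hprime q hq).factorization_pow, Finsupp.single_eq_same]
    · intro b _ hb
      rw [(hprime b b.2).factorization_pow, Finsupp.single_eq_of_ne']
      exact fun h => hb (Subtype.ext h)
    · intro h; exact absurd (Finset.mem_attach _ _) h
  refine Finset.sum_nbij' (fun d => fun p _ => d.factorization p)
    (fun f => ∏ x ∈ n.primeFactors.attach, (x : ℕ) ^ f x.1 x.2) ?_ ?_ ?_ ?_ ?_
  · intro d hd
    rw [Finset.mem_pi]
    intro p hp
    rw [Finset.mem_range, Nat.lt_succ_iff]
    exact (Nat.factorization_le_iff_dvd (Nat.ne_of_gt (Nat.pos_of_mem_divisors hd)) hn).2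
      (Nat.dvd_of_mem_divisors hd) p
  · intro f hf
    rw [Nat.mem_divisors]
    constructor
    · conv_rhs => rw [← prod_primeFactors_pow_factorization hn dvd_rfl, ← Finset.prod_attach]
      apply Finset.prod_dvd_prod_of_dvd
      intro x _
      apply pow_dvd_pow
      have := Finset.mem_pi.1 hf x x.2
      rw [Finset.mem_range, Nat.lt_succ_iff] at this
      exact this
    · exact hn
  · intro d hd
    show ∏ x ∈ n.primeFactors.attach, (x:ℕ) ^ d.factorization x.1 = d
    rw [Finset.prod_attach n.primeFactors (fun p => p ^ d.factorization p)]
    exact prod_primeFactors_pow_factorization hn (Nat.dvd_of_mem_divisors hd)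
  · intro f hf
    funext p hp
    exact hfact f p hp
  · intro d hd
    exact (Finset.prod_attach n.primeFactors (fun p => g p (d.factorization p))).symm


lemma choose_mono_up {n k l : ℕ} (hkl : k ≤ l) (hl : l ≤ n / 2) :
    n.choose k ≤ n.choose l := by
  induction l, hkl using Nat.le_induction with
  | base => exact le_rfl
  | succ l hkl ih =>
    have hl' : l < n / 2 := lt_of_lt_of_le (Nat.lt_succ_self l) hl
    exact le_trans (ih (le_of_lt hl')) (Nat.choose_le_succ_of_lt_half_left hl')

lemma choose_anti {n m : ℕ} (h : n ≤ 2 * m) : n.choose (m + 1) ≤ n.choose m := by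
  rcases le_or_gt (m + 1) n with hm | hm
  · have hmn : m ≤ n := le_trans (Nat.le_succ m) hm
    rw [← Nat.choose_symm hm, ← Nat.choose_symm hmn]
    apply choose_mono_up
    · omega
    · omega
  · rw [Nat.choose_eq_zero_of_lt hm]
    exact Nat.zero_le _

lemma chebCoeff_nonneg (j n : ℕ) : 0 ≤ chebCoeff j n := by
  unfold chebCoeff
  split
  · rename_i h
    have : n ≤ 2 * ((n + j) / 2) := by omega
    have := choose_anti this
    simp only [sub_nonneg, Nat.cast_le]
    exact this
  · exact le_rfl

lemma chebCoeff_le (j n : ℕ) : chebCoeff j n ≤ (n.choose ((n + j) / 2) : ℝ) := by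
  unfold chebCoeff
  split
  · have : (0:ℝ) ≤ (n.choose ((n + j) / 2 + 1) : ℝ) := Nat.cast_nonneg _
    linarith
  · exact Nat.cast_nonneg _

lemma chebCoeff_eq_zero_of_odd (j n : ℕ) (h : (n + j) % 2 ≠ 0) : chebCoeff j n = 0 := by
  unfold chebCoeff; rw [if_neg h]

lemma sqrt_prod {ι : Type*} (s : Finset ι) (f : ι → ℝ) (hf : ∀ i ∈ s, 0 ≤ f i) :
    Real.sqrt (∏ i ∈ s, f i) = ∏ i ∈ s, Real.sqrt (f i) := by
  induction s using Finset.cons_induction with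
  | empty => simp
  | cons a s ha ih =>
    rw [Finset.prod_cons, Finset.prod_cons, Real.sqrt_mul (hf a (Finset.mem_cons_self a s)),
      ih (fun i hi => hf i (Finset.mem_cons_of_mem hi))]

/-- The key per-prime estimate. -/
lemma cheb_sum_le (p n : ℕ) (hp : 2 ≤ p) :
    ∑ j ∈ Finset.range (n + 1), chebCoeff j n * Real.sqrt ((p : ℝ) ^ j)
      ≤ (((p + 1) ^ n : ℕ) : ℝ) / Real.sqrt (((p ^ n : ℕ) : ℝ)) := by
  set x := Real.sqrt p with hx
  have hp0 : (0:ℝ) ≤ p := by positivity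
  have hp1 : (1:ℝ) ≤ (p:ℝ) := by exact_mod_cast (by omega : 1 ≤ p)
  have hx1 : 1 ≤ x := by
    rw [hx, show (1:ℝ) = Real.sqrt 1 by simp]
    exact Real.sqrt_le_sqrt hp1
  have hx0 : 0 < x := lt_of_lt_of_le one_pos hx1
  have hx2 : x ^ 2 = p := Real.sq_sqrt hp0
  have hx0' : (0:ℝ) ≤ x := Real.sqrt_nonneg _
  have hsq : ∀ j : ℕ, Real.sqrt ((p:ℝ) ^ j) = x ^ j := fun j => by
    rw [← hx2, ← pow_mul, mul_comm 2 j, pow_mul]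
    exact Real.sqrt_sq (pow_nonneg hx0' j)
  -- reduce to: x^n * LHS ≤ (p+1)^n
  have hxn : Real.sqrt (((p ^ n : ℕ) : ℝ)) = x ^ n := by
    push_cast; rw [hsq n]
  rw [hxn, le_div_iff₀ (by positivity)]
  -- LHS * x^n = sum of chebCoeff * x^(j+n)
  have key : (∑ j ∈ Finset.range (n + 1), chebCoeff j n * Real.sqrt ((p:ℝ) ^ j)) * x ^ n
      = ∑ j ∈ Finset.range (n + 1), chebCoeff j n * x ^ (n + j) := by
    rw [Finset.sum_mul]
    apply Finset.sum_congr rfl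
    intro j _
    rw [hsq j, mul_assoc, ← pow_add, add_comm j n]
  rw [key]
  -- bound by binomial terms over even-parity j
  have step1 : ∑ j ∈ Finset.range (n + 1), chebCoeff j n * x ^ (n + j)
      ≤ ∑ j ∈ (Finset.range (n + 1)).filter (fun j => (n + j) % 2 = 0),
          (n.choose ((n + j) / 2) : ℝ) * (x ^ 2) ^ ((n + j) / 2) := by
    rw [← Finset.sum_filter_add_sum_filter_not (Finset.range (n+1)) (fun j => (n + j) % 2 = 0)]
    have h2 : ∑ j ∈ (Finset.range (n+1)).filter (fun j => ¬ (n + j) % 2 = 0),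
        chebCoeff j n * x ^ (n + j) = 0 := by
      apply Finset.sum_eq_zero
      intro j hj
      rw [chebCoeff_eq_zero_of_odd j n (Finset.mem_filter.1 hj).2, zero_mul]
    rw [h2, add_zero]
    apply Finset.sum_le_sum
    intro j hj
    have hpar := (Finset.mem_filter.1 hj).2
    have : (x ^ 2) ^ ((n + j) / 2) = x ^ (n + j) := by
      rw [← pow_mul]
      congr 1
      omega
    rw [this]
    exact mul_le_mul_of_nonneg_right (chebCoeff_le j n) (by positivity)
  refine step1.trans ?_
  -- reindex by k = (n+j)/2 and compare with binomial theorem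
  have step2 : ∑ j ∈ (Finset.range (n + 1)).filter (fun j => (n + j) % 2 = 0),
      (n.choose ((n + j) / 2) : ℝ) * (x ^ 2) ^ ((n + j) / 2)
      ≤ ∑ k ∈ Finset.range (n + 1), (n.choose k : ℝ) * (x ^ 2) ^ k := by
    have hinj : ∀ a ∈ (Finset.range (n + 1)).filter (fun j => (n + j) % 2 = 0),
        ∀ b ∈ (Finset.range (n + 1)).filter (fun j => (n + j) % 2 = 0),
        (n + a) / 2 = (n + b) / 2 → a = b := by
      intro a ha b hb hab
      simp only [Finset.mem_filter, Finset.mem_range] at ha hb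
      omega
    calc ∑ j ∈ (Finset.range (n + 1)).filter (fun j => (n + j) % 2 = 0),
          (n.choose ((n + j) / 2) : ℝ) * (x ^ 2) ^ ((n + j) / 2)
        = ∑ k ∈ ((Finset.range (n + 1)).filter (fun j => (n + j) % 2 = 0)).image
            (fun j => (n + j) / 2), (n.choose k : ℝ) * (x ^ 2) ^ k :=
          (Finset.sum_image (f := fun k => (n.choose k : ℝ) * (x ^ 2) ^ k) hinj).symm
      _ ≤ ∑ k ∈ Finset.range (n + 1), (n.choose k : ℝ) * (x ^ 2) ^ k := by
          apply Finset.sum_le_sum_of_subset_of_nonneg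
          · intro k hk
            simp only [Finset.mem_image, Finset.mem_filter, Finset.mem_range] at hk ⊢
            obtain ⟨j, ⟨hj, _⟩, rfl⟩ := hk
            omega
          · intro k _ _
            positivity
  refine step2.trans ?_
  have : (((p + 1) ^ n : ℕ) : ℝ) = (x ^ 2 + 1) ^ n := by
    push_cast; rw [hx2]
  rw [this, add_pow]
  apply le_of_eq
  apply Finset.sum_congr rfl
  intro k _
  rw [one_pow]
  ring



lemma chebCoeffProd_nonneg (ℓ d : ℕ) : 0 ≤ chebCoeffProd ℓ d :=
  Finset.prod_nonneg fun p _ => chebCoeff_nonneg _ _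

lemma inner_nonneg (ℓ : ℕ) :
    0 ≤ ∑ d ∈ ℓ.divisors, chebCoeffProd ℓ d * Real.sqrt d :=
  Finset.sum_nonneg fun d _ =>
    mul_nonneg (chebCoeffProd_nonneg ℓ d) (Real.sqrt_nonneg _)

lemma nuCM_pos (ℓ : ℕ) : 0 < nuCM ℓ :=
  Finset.prod_pos fun p _ => pow_pos (Nat.succ_pos p) _

lemma sqrt_nat_prod_pow (ℓ : ℕ) (hℓ : ℓ ≠ 0) :
    ∏ p ∈ ℓ.primeFactors, Real.sqrt (((p ^ ℓ.factorization p : ℕ) : ℝ)) = Real.sqrt ℓ := by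
  rw [← sqrt_prod _ _ (fun p _ => by positivity)]
  congr 1
  push_cast
  exact_mod_cast congrArg (fun m : ℕ => (m : ℝ)) (prod_primeFactors_pow_factorization hℓ dvd_rfl)

lemma inner_le (ℓ : ℕ) (hℓ : ℓ ≠ 0) :
    ∑ d ∈ ℓ.divisors, chebCoeffProd ℓ d * Real.sqrt d
      ≤ (nuCM ℓ : ℝ) / Real.sqrt ℓ := by
  have h1 : ∀ d ∈ ℓ.divisors, chebCoeffProd ℓ d * Real.sqrt d
      = ∏ p ∈ ℓ.primeFactors,
          (chebCoeff (d.factorization p) (ℓ.factorization p)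
            * Real.sqrt ((p : ℝ) ^ d.factorization p)) := by
    intro d hd
    rw [Finset.prod_mul_distrib]
    congr 1
    rw [← sqrt_prod _ _ (fun p _ => by positivity)]
    congr 1
    exact_mod_cast congrArg (fun m : ℕ => (m : ℝ))
      (prod_primeFactors_pow_factorization hℓ (Nat.dvd_of_mem_divisors hd)).symm
  rw [Finset.sum_congr rfl h1,
    sum_divisors_prod ℓ hℓ (fun p j => chebCoeff j (ℓ.factorization p) * Real.sqrt ((p:ℝ) ^ j))]
  calc ∏ p ∈ ℓ.primeFactors, ∑ j ∈ Finset.range (ℓ.factorization p + 1),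
        chebCoeff j (ℓ.factorization p) * Real.sqrt ((p:ℝ) ^ j)
      ≤ ∏ p ∈ ℓ.primeFactors,
          ((((p + 1) ^ ℓ.factorization p : ℕ) : ℝ)
            / Real.sqrt (((p ^ ℓ.factorization p : ℕ) : ℝ))) := by
        apply Finset.prod_le_prod
        · intro p _
          exact Finset.sum_nonneg fun j _ =>
            mul_nonneg (chebCoeff_nonneg _ _) (Real.sqrt_nonneg _)
        · intro p hp
          exact cheb_sum_le p (ℓ.factorization p) (Nat.prime_of_mem_primeFactors hp).two_le
    _ = (nuCM ℓ : ℝ) / Real.sqrt ℓ := by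
        rw [Finset.prod_div_distrib, sqrt_nat_prod_pow ℓ hℓ]
        congr 1
        rw [nuCM, Nat.cast_prod]

lemma term_le_one (ℓ : ℕ) (hℓ : ℓ ≠ 0) :
    ((ℓ : ℝ) / (nuCM ℓ : ℝ) ^ 2) *
      (∑ d ∈ ℓ.divisors, chebCoeffProd ℓ d * Real.sqrt d) ^ 2 ≤ 1 := by
  have hν : (0:ℝ) < (nuCM ℓ : ℝ) := by exact_mod_cast nuCM_pos ℓ
  have hl : (0:ℝ) < (ℓ : ℝ) := by exact_mod_cast Nat.pos_of_ne_zero hℓ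
  have hsq : (∑ d ∈ ℓ.divisors, chebCoeffProd ℓ d * Real.sqrt d) ^ 2
      ≤ ((nuCM ℓ : ℝ) / Real.sqrt ℓ) ^ 2 :=
    pow_le_pow_left₀ (inner_nonneg ℓ) (inner_le ℓ hℓ) 2
  have h2 : ((nuCM ℓ : ℝ) / Real.sqrt ℓ) ^ 2 = (nuCM ℓ : ℝ) ^ 2 / ℓ := by
    rw [div_pow, Real.sq_sqrt hl.le]
  calc ((ℓ : ℝ) / (nuCM ℓ : ℝ) ^ 2) *
        (∑ d ∈ ℓ.divisors, chebCoeffProd ℓ d * Real.sqrt d) ^ 2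
      ≤ ((ℓ : ℝ) / (nuCM ℓ : ℝ) ^ 2) * ((nuCM ℓ : ℝ) ^ 2 / ℓ) := by
        rw [← h2]
        exact mul_le_mul_of_nonneg_left hsq (by positivity)
    _ = 1 := by field_simp


section counting
variable {ε : ℝ}

lemma geom_tail_le (hε : 0 < ε) {p : ℕ} (hp : 2 ≤ p) (m : ℕ) :
    ∑ j ∈ Finset.range (m + 1), ((p : ℝ) ^ j) ^ (-ε) ≤ (1 - (p : ℝ) ^ (-ε))⁻¹ := by
  have hp1 : (1:ℝ) < p := by exact_mod_cast hp
  set r := (p : ℝ) ^ (-ε) with hr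
  have hr0 : 0 ≤ r := Real.rpow_nonneg (by positivity) _
  have hr1 : r < 1 := Real.rpow_lt_one_of_one_lt_of_neg hp1 (by linarith)
  have hterm : ∀ j : ℕ, ((p : ℝ) ^ j) ^ (-ε) = r ^ j := by
    intro j
    rw [← Real.rpow_natCast (p:ℝ) j, ← Real.rpow_mul (by positivity), mul_comm,
      Real.rpow_mul (by positivity), Real.rpow_natCast]
  have h1r : 0 < 1 - r := by linarith
  calc ∑ j ∈ Finset.range (m + 1), ((p : ℝ) ^ j) ^ (-ε)
      = ∑ j ∈ Finset.range (m + 1), r ^ j := by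
        exact Finset.sum_congr rfl fun j _ => hterm j
    _ = (r ^ (m+1) - 1) / (r - 1) := geom_sum_eq (ne_of_lt hr1) (m+1)
    _ = (1 - r ^ (m+1)) / (1 - r) := by rw [← neg_div_neg_eq]; ring_nf
    _ ≤ 1 / (1 - r) := by
        gcongr
        have : 0 ≤ r ^ (m+1) := pow_nonneg hr0 _
        linarith
    _ = (1 - r)⁻¹ := one_div _

end counting

section counting2
variable {ε : ℝ}

lemma inv_one_sub_rpow_pos (hε : 0 < ε) {p : ℕ} (hp : 2 ≤ p) :
    0 < (1 - (p : ℝ) ^ (-ε))⁻¹ := by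
  have hp1 : (1:ℝ) < p := by exact_mod_cast hp
  have : (p : ℝ) ^ (-ε) < 1 := Real.rpow_lt_one_of_one_lt_of_neg hp1 (by linarith)
  have : 0 < 1 - (p:ℝ) ^ (-ε) := by linarith
  positivity

lemma factor_le_K (hε : 0 < ε) {p : ℕ} (hp : 2 ≤ p) :
    (1 - (p : ℝ) ^ (-ε))⁻¹ ≤ (1 - (2 : ℝ) ^ (-ε))⁻¹ := by
  have hp2 : (2:ℝ) ≤ (p:ℝ) := by exact_mod_cast hp
  have h2e : (2:ℝ) ^ ε ≤ (p:ℝ) ^ ε := Real.rpow_le_rpow (by norm_num) hp2 hε.le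
  have h2pos : (0:ℝ) < (2:ℝ) ^ ε := Real.rpow_pos_of_pos (by norm_num) _
  have hle : (p : ℝ) ^ (-ε) ≤ (2 : ℝ) ^ (-ε) := by
    rw [Real.rpow_neg (by positivity), Real.rpow_neg (by norm_num)]
    exact inv_anti₀ h2pos h2e
  have h21 : (2:ℝ) ^ (-ε) < 1 := Real.rpow_lt_one_of_one_lt_of_neg (by norm_num) (by linarith)
  have h2r : 0 < 1 - (2:ℝ) ^ (-ε) := by linarith
  apply inv_anti₀ h2r
  linarith

lemma factor_le_two (hε : 0 < ε) {p : ℕ} (hp : 2 ≤ p)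
    (hbig : (2 : ℝ) ^ (1/ε) ≤ (p : ℝ)) :
    (1 - (p : ℝ) ^ (-ε))⁻¹ ≤ 2 := by
  have hp0 : (0:ℝ) < p := by positivity
  have h1 : (2:ℝ) = ((2:ℝ) ^ (1/ε)) ^ ε := by
    rw [← Real.rpow_mul (by norm_num : (0:ℝ) ≤ 2), one_div, inv_mul_cancel₀ hε.ne',
      Real.rpow_one]
  have h2 : (2:ℝ) ≤ (p:ℝ) ^ ε := by
    rw [h1]
    exact Real.rpow_le_rpow (by positivity) hbig hε.le
  have hinv : (p : ℝ) ^ (-ε) ≤ 1/2 := by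
    rw [Real.rpow_neg hp0.le]
    rw [one_div]
    exact inv_anti₀ (by norm_num) h2
  have : (1:ℝ)/2 ≤ 1 - (p:ℝ) ^ (-ε) := by linarith
  calc (1 - (p : ℝ) ^ (-ε))⁻¹ ≤ ((1:ℝ)/2)⁻¹ := inv_anti₀ (by norm_num) this
    _ = 2 := by norm_num

lemma two_pow_card_le_tau (L : ℕ) (hL : L ≠ 0) :
    2 ^ L.primeFactors.card ≤ L.divisors.card := by
  rw [Nat.card_divisors hL, ← Finset.prod_const]
  apply Finset.prod_le_prod'
  intro p hp
  have : 1 ≤ L.factorization p := by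
    rcases Nat.mem_primeFactors.1 hp with ⟨pp, pdvd, _⟩
    exact (Nat.Prime.factorization_pos_of_dvd pp hL pdvd)
  omega

lemma prod_inv_le (hε : 0 < ε) (L : ℕ) (hL : L ≠ 0) :
    ∏ p ∈ L.primeFactors, (1 - (p : ℝ) ^ (-ε))⁻¹
      ≤ (1 - (2 : ℝ) ^ (-ε))⁻¹ ^ (⌈(2:ℝ) ^ (1/ε)⌉₊ + 1) * (L.divisors.card : ℝ) := by
  set K : ℝ := (1 - (2 : ℝ) ^ (-ε))⁻¹ with hKdef
  set B : ℕ := ⌈(2:ℝ) ^ (1/ε)⌉₊ with hBdef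
  have hK1 : 1 ≤ K := by
    rw [hKdef]
    have h21 : (2:ℝ) ^ (-ε) < 1 := Real.rpow_lt_one_of_one_lt_of_neg (by norm_num) (by linarith)
    have h2r : 0 < 1 - (2:ℝ) ^ (-ε) := by linarith
    rw [le_inv_comm₀ one_pos h2r]
    have : (0:ℝ) < (2:ℝ) ^ (-ε) := Real.rpow_pos_of_pos (by norm_num) _
    linarith
  have hprime : ∀ p ∈ L.primeFactors, 2 ≤ p := fun p hp =>
    (Nat.prime_of_mem_primeFactors hp).two_le
  rw [← Finset.prod_filter_mul_prod_filter_not L.primeFactors (fun p => p ≤ B)]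
  have h1 : ∏ p ∈ L.primeFactors.filter (fun p => p ≤ B), (1 - (p : ℝ) ^ (-ε))⁻¹
      ≤ K ^ (B + 1) := by
    calc ∏ p ∈ L.primeFactors.filter (fun p => p ≤ B), (1 - (p : ℝ) ^ (-ε))⁻¹
        ≤ ∏ p ∈ L.primeFactors.filter (fun p => p ≤ B), K := by
          apply Finset.prod_le_prod
          · intro p hp
            exact (inv_one_sub_rpow_pos hε (hprime p (Finset.mem_filter.1 hp).1)).le
          · intro p hp
            exact factor_le_K hε (hprime p (Finset.mem_filter.1 hp).1)
      _ = K ^ (L.primeFactors.filter (fun p => p ≤ B)).card := Finset.prod_const K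
      _ ≤ K ^ (B + 1) := by
          apply pow_le_pow_right₀ hK1
          have : L.primeFactors.filter (fun p => p ≤ B) ⊆ Finset.range (B + 1) := by
            intro p hp
            rw [Finset.mem_range, Nat.lt_succ_iff]
            exact (Finset.mem_filter.1 hp).2
          simpa using Finset.card_le_card this
  have h2 : ∏ p ∈ L.primeFactors.filter (fun p => ¬ p ≤ B), (1 - (p : ℝ) ^ (-ε))⁻¹
      ≤ (L.divisors.card : ℝ) := by
    calc ∏ p ∈ L.primeFactors.filter (fun p => ¬ p ≤ B), (1 - (p : ℝ) ^ (-ε))⁻¹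
        ≤ ∏ p ∈ L.primeFactors.filter (fun p => ¬ p ≤ B), 2 := by
          apply Finset.prod_le_prod
          · intro p hp
            exact (inv_one_sub_rpow_pos hε (hprime p (Finset.mem_filter.1 hp).1)).le
          · intro p hp
            have hpB : B < p := by
              have := (Finset.mem_filter.1 hp).2
              omega
            apply factor_le_two hε (hprime p (Finset.mem_filter.1 hp).1)
            calc (2:ℝ) ^ (1/ε) ≤ (B : ℝ) := Nat.le_ceil _
              _ ≤ (p : ℝ) := by exact_mod_cast hpB.le
      _ = 2 ^ (L.primeFactors.filter (fun p => ¬ p ≤ B)).card := Finset.prod_const 2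
      _ ≤ 2 ^ L.primeFactors.card := by
          apply pow_le_pow_right₀ (by norm_num)
          exact Finset.card_le_card (Finset.filter_subset _ _)
      _ ≤ (L.divisors.card : ℝ) := by
          exact_mod_cast two_pow_card_le_tau L hL
  have hpos1 : 0 ≤ ∏ p ∈ L.primeFactors.filter (fun p => p ≤ B), (1 - (p : ℝ) ^ (-ε))⁻¹ :=
    Finset.prod_nonneg fun p hp =>
      (inv_one_sub_rpow_pos hε (hprime p (Finset.mem_filter.1 hp).1)).le
  have hpos2 : 0 ≤ ∏ p ∈ L.primeFactors.filter (fun p => ¬ p ≤ B), (1 - (p : ℝ) ^ (-ε))⁻¹ :=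
    Finset.prod_nonneg fun p hp =>
      (inv_one_sub_rpow_pos hε (hprime p (Finset.mem_filter.1 hp).1)).le
  exact mul_le_mul h1 h2 hpos2 (by positivity)

end counting2

/-- For every `ε > 0` there is `C = C(ε) > 0` such that for every positive
integer `L` and every real `Y ≥ 1`,
`∑_{ℓ ≤ Y, ℓ ∣ L^∞} (ℓ / ν(ℓ)²) (∑_{d ∣ ℓ} c_ℓ(d) √d)² ≤ C · Y^ε · τ(L)`,
where the outer sum is over positive integers `ℓ ≤ Y` all of whose prime factors divide
`L`, and `τ(L)` is the number of divisors of `L`. -/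
theorem stmt10 (ε : ℝ) (hε : 0 < ε) :
    ∃ C : ℝ, 0 < C ∧ ∀ L : ℕ, 0 < L → ∀ Y : ℝ, 1 ≤ Y →
      ∑ ℓ ∈ (Finset.Icc 1 ⌊Y⌋₊).filter (fun ℓ => ℓ.primeFactors ⊆ L.primeFactors),
        ((ℓ : ℝ) / (nuCM ℓ : ℝ) ^ 2) *
          (∑ d ∈ ℓ.divisors, chebCoeffProd ℓ d * Real.sqrt d) ^ 2
        ≤ C * Y ^ ε * (L.divisors.card : ℝ) := by
  refine ⟨(1 - (2 : ℝ) ^ (-ε))⁻¹ ^ (⌈(2:ℝ) ^ (1/ε)⌉₊ + 1), ?_, ?_⟩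
  · have h21 : (2:ℝ) ^ (-ε) < 1 :=
      Real.rpow_lt_one_of_one_lt_of_neg (by norm_num) (by linarith)
    have h2r : 0 < 1 - (2:ℝ) ^ (-ε) := by linarith
    positivity
  intro L hL Y hY
  have hL0 : L ≠ 0 := hL.ne'
  have hN : 1 ≤ ⌊Y⌋₊ := Nat.le_floor (by exact_mod_cast hY)
  set N := ⌊Y⌋₊ with hNdef
  have hMne : L ^ N ≠ 0 := pow_ne_zero _ hL0
  set S := (Finset.Icc 1 N).filter (fun ℓ => ℓ.primeFactors ⊆ L.primeFactors) with hSdef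
  have hmem : ∀ ℓ ∈ S, 1 ≤ ℓ ∧ ℓ ≤ N ∧ ℓ.primeFactors ⊆ L.primeFactors := by
    intro ℓ hℓ
    rw [hSdef, Finset.mem_filter, Finset.mem_Icc] at hℓ
    exact ⟨hℓ.1.1, hℓ.1.2, hℓ.2⟩
  have hsub : S ⊆ (L ^ N).divisors := by
    intro ℓ hℓ
    obtain ⟨h1, h2, h3⟩ := hmem ℓ hℓ
    rw [Nat.mem_divisors]
    refine ⟨?_, hMne⟩
    rw [← Nat.factorization_le_iff_dvd (by omega) hMne]
    rw [Finsupp.le_def]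
    intro p
    rw [Nat.factorization_pow, Finsupp.smul_apply, smul_eq_mul]
    by_cases hp : ℓ.factorization p = 0
    · omega
    · have hpf : p ∈ ℓ.primeFactors := by
        rw [← Nat.support_factorization]
        exact Finsupp.mem_support_iff.2 hp
      have hpp : p.Prime := Nat.prime_of_mem_primeFactors hpf
      have hLp : 1 ≤ L.factorization p := by
        rcases Nat.mem_primeFactors.1 (h3 hpf) with ⟨_, pdvd, _⟩
        exact Nat.Prime.factorization_pos_of_dvd hpp hL0 pdvd
      have hordp : p ^ ℓ.factorization p ≤ ℓ := Nat.ordProj_le p (by omega)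
      have hlt : ℓ.factorization p < 2 ^ ℓ.factorization p := Nat.lt_two_pow_self
      have h22 : 2 ^ ℓ.factorization p ≤ p ^ ℓ.factorization p :=
        Nat.pow_le_pow_left hpp.two_le _
      have hvN : ℓ.factorization p ≤ N := by omega
      calc ℓ.factorization p ≤ N := hvN
        _ ≤ N * L.factorization p := Nat.le_mul_of_pos_right N (by omega)
  have hYpos : (0:ℝ) < Y := by linarith
  calc ∑ ℓ ∈ S, ((ℓ : ℝ) / (nuCM ℓ : ℝ) ^ 2) *
        (∑ d ∈ ℓ.divisors, chebCoeffProd ℓ d * Real.sqrt d) ^ 2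
      ≤ ∑ ℓ ∈ S, (1:ℝ) := by
        apply Finset.sum_le_sum
        intro ℓ hℓ
        exact term_le_one ℓ (by have := (hmem ℓ hℓ).1; omega)
    _ ≤ ∑ ℓ ∈ S, Y ^ ε * (ℓ : ℝ) ^ (-ε) := by
        apply Finset.sum_le_sum
        intro ℓ hℓ
        obtain ⟨h1, h2, _⟩ := hmem ℓ hℓ
        have hl0 : (0:ℝ) < (ℓ:ℝ) := by exact_mod_cast h1
        have hlY : (ℓ:ℝ) ≤ Y := by
          calc (ℓ:ℝ) ≤ (N:ℝ) := by exact_mod_cast h2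
            _ ≤ Y := Nat.floor_le hYpos.le
        have hrp : (ℓ:ℝ) ^ ε ≤ Y ^ ε := Real.rpow_le_rpow hl0.le hlY hε.le
        have hneg : (0:ℝ) < (ℓ:ℝ) ^ (-ε) := Real.rpow_pos_of_pos hl0 _
        calc (1:ℝ) = (ℓ:ℝ) ^ ε * (ℓ:ℝ) ^ (-ε) := by
              rw [← Real.rpow_add hl0, add_neg_cancel, Real.rpow_zero]
          _ ≤ Y ^ ε * (ℓ:ℝ) ^ (-ε) := mul_le_mul_of_nonneg_right hrp hneg.le
    _ = Y ^ ε * ∑ ℓ ∈ S, (ℓ : ℝ) ^ (-ε) := (Finset.mul_sum _ _ _).symm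
    _ ≤ Y ^ ε * ∑ d ∈ (L ^ N).divisors, (d : ℝ) ^ (-ε) := by
        apply mul_le_mul_of_nonneg_left ?_ (by positivity)
        apply Finset.sum_le_sum_of_subset_of_nonneg hsub
        intro d _ _
        exact Real.rpow_nonneg (Nat.cast_nonneg d) _
    _ = Y ^ ε * ∏ p ∈ (L ^ N).primeFactors,
          ∑ j ∈ Finset.range ((L ^ N).factorization p + 1), ((p:ℝ) ^ j) ^ (-ε) := by
        congr 1
        rw [← sum_divisors_prod (L ^ N) hMne (fun p j => ((p:ℝ) ^ j) ^ (-ε))]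
        apply Finset.sum_congr rfl
        intro d hd
        have hd' : (d:ℝ) = ∏ p ∈ (L ^ N).primeFactors, (p:ℝ) ^ (d.factorization p) := by
          exact_mod_cast congrArg (fun m : ℕ => (m:ℝ))
            (prod_primeFactors_pow_factorization hMne (Nat.dvd_of_mem_divisors hd)).symm
        rw [hd']
        exact (Real.finset_prod_rpow _ _ (fun p _ => by positivity) _).symm
    _ ≤ Y ^ ε * ∏ p ∈ L.primeFactors, (1 - (p:ℝ) ^ (-ε))⁻¹ := by
        rw [Nat.primeFactors_pow L (by omega : N ≠ 0)]
        apply mul_le_mul_of_nonneg_left ?_ (by positivity)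
        apply Finset.prod_le_prod
        · intro p _
          exact Finset.sum_nonneg fun j _ => Real.rpow_nonneg (by positivity) _
        · intro p hp
          exact geom_tail_le hε (Nat.prime_of_mem_primeFactors hp).two_le _
    _ ≤ Y ^ ε * ((1 - (2 : ℝ) ^ (-ε))⁻¹ ^ (⌈(2:ℝ) ^ (1/ε)⌉₊ + 1) * (L.divisors.card : ℝ)) := by
        apply mul_le_mul_of_nonneg_left (prod_inv_le hε L hL0) (by positivity)
    _ = (1 - (2 : ℝ) ^ (-ε))⁻¹ ^ (⌈(2:ℝ) ^ (1/ε)⌉₊ + 1) * Y ^ ε * (L.divisors.card : ℝ) := by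
        ring
end

section
/- Let γ₀ = log(3/2)/log 2 − 1/2. For every ε with 0 < ε < γ₀ there exists a constant C = C(ε) > 0 such that for every positive integer L and every real Y ≥ 1, Σ_{ℓ > Y, ℓ | L^∞} (ℓ^{1+ε} / ν(ℓ)²) · (Σ_{d | ℓ} c_ℓ(d))² ≤ C · Y^{−2γ₀ + 2ε} · τ(L), where the outer sum is over positive integers ℓ > Y all of whose prime factors divide L. -/
open Finset Real

private lemma st12_choose_le (n k : ℕ) : (n.choose k : ℝ) ≤ 2 ^ n := by
  have h : n.choose k ≤ 2 ^ n := by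
    rcases le_or_gt k n with hk | hk
    · calc n.choose k ≤ ∑ m ∈ Finset.range (n+1), n.choose m :=
          Finset.single_le_sum (fun i _ => Nat.zero_le _) (Finset.mem_range.mpr (Nat.lt_succ_of_le hk))
      _ = 2 ^ n := Nat.sum_range_choose n
    · simp [Nat.choose_eq_zero_of_lt hk]
  calc (n.choose k : ℝ) ≤ ((2^n : ℕ) : ℝ) := by exact_mod_cast h
  _ = 2 ^ n := by push_cast; ring

private lemma st12_cheb_abs (j n : ℕ) : |chebCoeff j n| ≤ 2 ^ n := by
  unfold chebCoeff
  split
  · have h1 := st12_choose_le n ((n+j)/2)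
    have h2 := st12_choose_le n ((n+j)/2 + 1)
    have h3 : (0:ℝ) ≤ n.choose ((n+j)/2) := Nat.cast_nonneg _
    have h4 : (0:ℝ) ≤ n.choose ((n+j)/2 + 1) := Nat.cast_nonneg _
    rw [abs_sub_le_iff]
    constructor <;> linarith
  · rw [abs_zero]; positivity

private lemma st12_sq_le_four_pow (n : ℕ) : ((n:ℝ)+1)^2 ≤ 4^n := by
  induction n with
  | zero => norm_num
  | succ m ih =>
    have : (((m:ℝ)+1)+1)^2 ≤ 4 * ((m:ℝ)+1)^2 := by nlinarith [Nat.cast_nonneg (α := ℝ) m]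
    calc ((((m+1):ℕ):ℝ)+1)^2 = (((m:ℝ)+1)+1)^2 := by push_cast; ring
    _ ≤ 4 * ((m:ℝ)+1)^2 := this
    _ ≤ 4 * 4^m := by nlinarith
    _ = 4^(m+1) := by ring


private lemma st12_key (p : ℝ) (hp : 2 ≤ p) :
    p ^ (Real.log (3/2) / Real.log 2) ≤ (p+1)/2 := by
  have hβdef : Real.log (3/2) / Real.log 2 = Real.logb 2 (3/2) := rfl
  have h2β : (2:ℝ) ^ (Real.logb 2 (3/2)) = 3/2 :=
    Real.rpow_logb (by norm_num) (by norm_num) (by norm_num)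
  have hp0 : (0:ℝ) < p := lt_of_lt_of_le two_pos hp
  set t := Real.logb 2 p with htdef
  have ht1 : 1 ≤ t := by
    have h := Real.logb_le_logb_of_le (by norm_num : (1:ℝ) < 2) (by norm_num : (0:ℝ) < 2) hp
    rwa [Real.logb_self_eq_one (by norm_num)] at h
  have hpt : (2:ℝ) ^ t = p := Real.rpow_logb (by norm_num) (by norm_num) hp0
  have hpow : p ^ (Real.logb 2 (3/2)) = ((3:ℝ)/2) ^ t := by
    rw [← hpt, ← Real.rpow_mul (by norm_num : (0:ℝ) ≤ 2), mul_comm,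
      Real.rpow_mul (by norm_num : (0:ℝ) ≤ 2), h2β]
  have hconv : (3:ℝ)^t ≤ ((2:ℝ)^t + (4:ℝ)^t)/2 := by
    have hc := convexOn_rpow ht1
    have h := hc.2 (Set.mem_Ici.mpr (by norm_num : (0:ℝ) ≤ 2))
      (Set.mem_Ici.mpr (by norm_num : (0:ℝ) ≤ 4))
      (by norm_num : (0:ℝ) ≤ 1/2) (by norm_num : (0:ℝ) ≤ 1/2) (by norm_num)
    norm_num at h
    linarith
  have h32 : ((3:ℝ)/2)^t = (3:ℝ)^t / (2:ℝ)^t := Real.div_rpow (by norm_num) (by norm_num) t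
  have h4 : (4:ℝ)^t = (2:ℝ)^t * (2:ℝ)^t := by
    rw [show (4:ℝ) = 2*2 by norm_num, Real.mul_rpow (by norm_num) (by norm_num)]
  rw [hβdef, hpow, h32, hpt, div_le_div_iff₀ hp0 (by norm_num : (0:ℝ) < 2)]
  rw [h4, hpt] at hconv
  nlinarith

private lemma st12_key2 (p : ℝ) (hp : 2 ≤ p) :
    4 * p ^ (2 * (Real.log (3/2) / Real.log 2)) ≤ (p+1)^2 := by
  have hp0 : (0:ℝ) < p := lt_of_lt_of_le two_pos hp
  have h := st12_key p hp
  have hsq : p ^ (2 * (Real.log (3/2) / Real.log 2))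
      = (p ^ (Real.log (3/2) / Real.log 2))^2 := by
    rw [mul_comm, Real.rpow_mul hp0.le, Real.rpow_two]
  have hb0 : 0 ≤ p ^ (Real.log (3/2) / Real.log 2) := (Real.rpow_pos_of_pos hp0 _).le
  rw [hsq]
  nlinarith

private lemma st12_pow_rpow (x : ℝ) (hx : 0 ≤ x) (m : ℕ) (r : ℝ) :
    (x ^ r) ^ m = (x ^ m) ^ r := by
  rw [← Real.rpow_natCast (x ^ r) m, ← Real.rpow_mul hx, mul_comm,
    Real.rpow_mul hx, Real.rpow_natCast]

private lemma st12_base (ε : ℝ) (p : ℝ) (hp : 2 ≤ p) :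
    4 * p ^ (1+ε) / (p+1)^2
      ≤ p ^ (-2*(Real.log (3/2)/Real.log 2 - 1/2) + 2*ε) * p ^ (-ε) := by
  have hp0 : (0:ℝ) < p := lt_of_lt_of_le two_pos hp
  have h1 : p ^ (-2*(Real.log (3/2)/Real.log 2 - 1/2) + 2*ε) * p ^ (-ε)
      = p ^ (1+ε) / p ^ (2*(Real.log (3/2)/Real.log 2)) := by
    rw [← Real.rpow_add hp0, ← Real.rpow_sub hp0]
    congr 1
    ring
  rw [h1, div_le_div_iff₀ (by positivity) (Real.rpow_pos_of_pos hp0 _)]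
  have hk := st12_key2 p hp
  have h2 : (0:ℝ) < p ^ (1+ε) := Real.rpow_pos_of_pos hp0 _
  nlinarith [Real.rpow_pos_of_pos hp0 (2*(Real.log (3/2)/Real.log 2))]

private lemma st12_term_bound (ε : ℝ) (ℓ : ℕ) (hl : 0 < ℓ) :
    ((ℓ : ℝ) ^ (1 + ε) / (nuCM ℓ : ℝ) ^ 2) * (∑ d ∈ ℓ.divisors, chebCoeffProd ℓ d) ^ 2
    ≤ (ℓ:ℝ) ^ (-2*(Real.log (3/2)/Real.log 2 - 1/2) + 2*ε)
      * ∏ p ∈ ℓ.primeFactors,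
          (((ℓ.factorization p : ℝ)+1)^2 * ((p:ℝ) ^ (-ε))^(ℓ.factorization p)) := by
  set δ := -2*(Real.log (3/2)/Real.log 2 - 1/2) + 2*ε with hδ
  set pf := ℓ.primeFactors with hpf
  set n : ℕ → ℕ := fun p => ℓ.factorization p with hn
  have h0 : ℓ ≠ 0 := hl.ne'
  have hℓ : (ℓ:ℝ) = ∏ p ∈ pf, (p:ℝ)^(n p) := by
    have h := Nat.factorization_prod_pow_eq_self h0
    rw [Finsupp.prod, Nat.support_factorization] at h
    rw [← h]
    push_cast
    rfl
  have hν : ((nuCM ℓ : ℕ):ℝ) = ∏ p ∈ pf, ((p:ℝ)+1)^(n p) := by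
    rw [nuCM]
    push_cast
    rfl
  have hτ : ((ℓ.divisors.card : ℕ):ℝ) = ∏ p ∈ pf, ((n p:ℝ)+1) := by
    rw [Nat.card_divisors h0]
    push_cast
    rfl
  have hcastnn : ∀ p : ℕ, (0:ℝ) ≤ (p:ℝ) := fun p => Nat.cast_nonneg p
  have hrpow : (ℓ:ℝ)^(1+ε) = ∏ p ∈ pf, ((p:ℝ)^(1+ε))^(n p) := by
    rw [hℓ, ← Real.finset_prod_rpow pf _ (fun p _ => by positivity) (1+ε)]
    exact Finset.prod_congr rfl fun p _ => (st12_pow_rpow (p:ℝ) (hcastnn p) (n p) (1+ε)).symm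
  -- step 1 : bound on the divisor sum
  have hsum : |∑ d ∈ ℓ.divisors, chebCoeffProd ℓ d|
      ≤ ((ℓ.divisors.card : ℕ):ℝ) * ∏ p ∈ pf, (2:ℝ)^(n p) := by
    calc |∑ d ∈ ℓ.divisors, chebCoeffProd ℓ d|
        ≤ ∑ d ∈ ℓ.divisors, |chebCoeffProd ℓ d| := Finset.abs_sum_le_sum_abs _ _
      _ ≤ ∑ _d ∈ ℓ.divisors, ∏ p ∈ pf, (2:ℝ)^(n p) := by
          apply Finset.sum_le_sum
          intro d _
          rw [chebCoeffProd, Finset.abs_prod]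
          exact Finset.prod_le_prod (fun p _ => abs_nonneg _)
            (fun p _ => st12_cheb_abs _ _)
      _ = ((ℓ.divisors.card : ℕ):ℝ) * ∏ p ∈ pf, (2:ℝ)^(n p) := by
          rw [Finset.sum_const, nsmul_eq_mul]
  have hsq : (∑ d ∈ ℓ.divisors, chebCoeffProd ℓ d)^2
      ≤ (((ℓ.divisors.card : ℕ):ℝ) * ∏ p ∈ pf, (2:ℝ)^(n p))^2 := by
    have h := pow_le_pow_left₀ (abs_nonneg _) hsum 2
    rwa [sq_abs] at h
  have hprefnn : (0:ℝ) ≤ (ℓ : ℝ) ^ (1 + ε) / (nuCM ℓ : ℝ) ^ 2 := by positivity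
  -- step 2 : rewrite as product over primes
  have heq : ((ℓ : ℝ) ^ (1 + ε) / (nuCM ℓ : ℝ) ^ 2)
        * (((ℓ.divisors.card : ℕ):ℝ) * ∏ p ∈ pf, (2:ℝ)^(n p))^2
      = ∏ p ∈ pf, (((p:ℝ)^(1+ε))^(n p) / (((p:ℝ)+1)^(n p))^2
          * (((n p:ℝ)+1) * (2:ℝ)^(n p))^2) := by
    rw [hrpow, hν, hτ, mul_pow, ← Finset.prod_pow, ← Finset.prod_pow, ← Finset.prod_pow,
      ← Finset.prod_mul_distrib, ← Finset.prod_div_distrib, ← Finset.prod_mul_distrib]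
    exact Finset.prod_congr rfl fun p _ => by ring
  -- step 3 : per-prime bound
  have hper : ∀ p ∈ pf, ((p:ℝ)^(1+ε))^(n p) / (((p:ℝ)+1)^(n p))^2
          * (((n p:ℝ)+1) * (2:ℝ)^(n p))^2
      ≤ ((p:ℝ)^δ)^(n p) * (((n p:ℝ)+1)^2 * ((p:ℝ)^(-ε))^(n p)) := by
    intro p hp
    have hprime : p.Prime := Nat.prime_of_mem_primeFactors hp
    have hp2 : (2:ℝ) ≤ (p:ℝ) := by exact_mod_cast hprime.two_le
    have hp0 : (0:ℝ) < (p:ℝ) := lt_of_lt_of_le two_pos hp2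
    have hQ : ((p:ℝ)^(1+ε))^(n p) / (((p:ℝ)+1)^(n p))^2
          * (((n p:ℝ)+1) * (2:ℝ)^(n p))^2
        = ((n p:ℝ)+1)^2 * (4*(p:ℝ)^(1+ε)/((p:ℝ)+1)^2)^(n p) := by
      rw [div_pow, mul_pow, mul_pow, ← pow_mul, ← pow_mul ((p:ℝ)+1),
        ← pow_mul (2:ℝ), mul_comm (n p) 2, pow_mul, pow_mul (2:ℝ)]
      have : ((2:ℝ)^2) = 4 := by norm_num
      rw [this]
      field_simp
    rw [hQ]
    have hbase : (0:ℝ) ≤ 4*(p:ℝ)^(1+ε)/((p:ℝ)+1)^2 := by positivity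
    have hb := st12_base ε (p:ℝ) hp2
    calc ((n p:ℝ)+1)^2 * (4*(p:ℝ)^(1+ε)/((p:ℝ)+1)^2)^(n p)
        ≤ ((n p:ℝ)+1)^2 * ((p:ℝ)^δ * (p:ℝ)^(-ε))^(n p) := by
          apply mul_le_mul_of_nonneg_left _ (by positivity)
          exact pow_le_pow_left₀ hbase hb (n p)
      _ = ((p:ℝ)^δ)^(n p) * (((n p:ℝ)+1)^2 * ((p:ℝ)^(-ε))^(n p)) := by
          rw [mul_pow]; ring
  -- step 4: combine
  calc ((ℓ : ℝ) ^ (1 + ε) / (nuCM ℓ : ℝ) ^ 2) * (∑ d ∈ ℓ.divisors, chebCoeffProd ℓ d) ^ 2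
      ≤ ((ℓ : ℝ) ^ (1 + ε) / (nuCM ℓ : ℝ) ^ 2)
        * (((ℓ.divisors.card : ℕ):ℝ) * ∏ p ∈ pf, (2:ℝ)^(n p))^2 :=
        mul_le_mul_of_nonneg_left hsq hprefnn
    _ = ∏ p ∈ pf, (((p:ℝ)^(1+ε))^(n p) / (((p:ℝ)+1)^(n p))^2
          * (((n p:ℝ)+1) * (2:ℝ)^(n p))^2) := heq
    _ ≤ ∏ p ∈ pf, (((p:ℝ)^δ)^(n p) * (((n p:ℝ)+1)^2 * ((p:ℝ)^(-ε))^(n p))) := by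
        apply Finset.prod_le_prod _ hper
        intro p hp
        positivity
    _ = (∏ p ∈ pf, ((p:ℝ)^δ)^(n p))
        * ∏ p ∈ pf, (((n p:ℝ)+1)^2 * ((p:ℝ)^(-ε))^(n p)) := Finset.prod_mul_distrib
    _ = (ℓ:ℝ)^δ * ∏ p ∈ pf, (((n p:ℝ)+1)^2 * ((p:ℝ)^(-ε))^(n p)) := by
        congr 1
        rw [hℓ, ← Real.finset_prod_rpow pf _ (fun p _ => by positivity) δ]
        exact Finset.prod_congr rfl fun p _ => st12_pow_rpow (p:ℝ) (hcastnn p) (n p) δ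

private lemma st12_euler (S : Finset ℕ) (g : ℕ → ℕ → ℝ)
    (hg0 : ∀ p, g p 0 = 1) (hgnn : ∀ p n, 0 ≤ g p n)
    (B : ℕ → ℝ) (hB : ∀ p ∈ S, ∀ N : ℕ, ∑ n ∈ Finset.range N, g p n ≤ B p)
    (A : Finset ℕ) :
    ∑ ℓ ∈ A, (if 0 < ℓ ∧ ℓ.primeFactors ⊆ S then ∏ p ∈ S, g p (ℓ.factorization p) else 0)
      ≤ ∏ p ∈ S, B p := by
  classical
  set N := A.sup id + 1 with hN
  rw [← Finset.sum_filter]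
  set T := A.filter (fun ℓ => 0 < ℓ ∧ ℓ.primeFactors ⊆ S) with hT
  have hrecon : ∀ ℓ ∈ T, ℓ = ∏ p ∈ S, p ^ ℓ.factorization p := by
    intro ℓ hℓ
    obtain ⟨hA, hpos, hsub⟩ := Finset.mem_filter.mp hℓ
    have h := Nat.factorization_prod_pow_eq_self hpos.ne'
    rw [Finsupp.prod, Nat.support_factorization] at h
    refine h.symm.trans (Finset.prod_subset hsub ?_)
    intro p _ hnp
    rw [← Nat.support_factorization] at hnp
    rw [Finsupp.notMem_support_iff.mp hnp, pow_zero]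
  have hmem : ∀ ℓ ∈ T, ∀ p, ℓ.factorization p ∈ Finset.range N := by
    intro ℓ hℓ p
    obtain ⟨hA, hpos, -⟩ := Finset.mem_filter.mp hℓ
    rw [Finset.mem_range]
    calc ℓ.factorization p < ℓ := Nat.factorization_lt p hpos.ne'
      _ ≤ A.sup id := Finset.le_sup (f := id) hA
      _ < N := Nat.lt_succ_self _
  set Φ : ℕ → (∀ p ∈ S, ℕ) := fun ℓ => (fun p _ => ℓ.factorization p) with hΦ
  have hinj : ∀ x ∈ T, ∀ y ∈ T, Φ x = Φ y → x = y := by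
    intro x hx y hy h
    rw [hrecon x hx, hrecon y hy]
    apply Finset.prod_congr rfl
    intro p hp
    have := congrFun (congrFun h p) hp
    simp only [hΦ] at this
    rw [this]
  set F : (∀ p ∈ S, ℕ) → ℝ := fun f => ∏ x ∈ S.attach, g x.1 (f x.1 x.2) with hF
  calc ∑ ℓ ∈ T, ∏ p ∈ S, g p (ℓ.factorization p)
      = ∑ ℓ ∈ T, F (Φ ℓ) := by
        apply Finset.sum_congr rfl
        intro ℓ _
        exact (Finset.prod_attach S (fun p => g p (ℓ.factorization p))).symm
    _ = ∑ f ∈ T.image Φ, F f := (Finset.sum_image hinj).symm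
    _ ≤ ∑ f ∈ S.pi (fun _ => Finset.range N), F f := by
        apply Finset.sum_le_sum_of_subset_of_nonneg
        · intro f hf
          obtain ⟨ℓ, hℓ, rfl⟩ := Finset.mem_image.mp hf
          rw [Finset.mem_pi]
          intro p hp
          exact hmem ℓ hℓ p
        · intro f _ _
          exact Finset.prod_nonneg fun x _ => hgnn _ _
    _ = ∏ p ∈ S, ∑ n ∈ Finset.range N, g p n := (Finset.prod_sum S _ _).symm
    _ ≤ ∏ p ∈ S, B p := by
        apply Finset.prod_le_prod
        · intro p _
          exact Finset.sum_nonneg fun n _ => hgnn _ _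
        · intro p hp
          exact hB p hp N

private lemma st12_geom_small (x : ℝ) (hx0 : 0 ≤ x) (hx : x ≤ 1/8) (N : ℕ) :
    ∑ n ∈ Finset.range N, ((n:ℝ)+1)^2 * x^n ≤ 2 := by
  have h1 : ∑ n ∈ Finset.range N, ((n:ℝ)+1)^2*x^n ≤ ∑ n ∈ Finset.range N, (1/2:ℝ)^n := by
    apply Finset.sum_le_sum
    intro n _
    have ha : ((n:ℝ)+1)^2*x^n ≤ 4^n * x^n :=
      mul_le_mul_of_nonneg_right (st12_sq_le_four_pow n) (pow_nonneg hx0 n)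
    have hb : (4:ℝ)^n * x^n = (4*x)^n := (mul_pow _ _ _).symm
    have hc : ((4:ℝ)*x)^n ≤ (1/2:ℝ)^n := pow_le_pow_left₀ (by positivity) (by linarith) n
    linarith [ha, hb ▸ hc]
  exact le_trans h1 (sum_geometric_two_le N)

private lemma st12_summableM (r : ℝ) (h0 : 0 ≤ r) (h1 : r < 1) :
    Summable (fun n : ℕ => ((n:ℝ)+1)^2 * r^n) := by
  have h2 : ‖r‖ < 1 := by rwa [Real.norm_eq_abs, abs_of_nonneg h0]
  have s2 := summable_pow_mul_geometric_of_norm_lt_one (R := ℝ) 2 h2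
  have s1 := summable_pow_mul_geometric_of_norm_lt_one (R := ℝ) 1 h2
  have s0 := summable_pow_mul_geometric_of_norm_lt_one (R := ℝ) 0 h2
  apply ((s2.add (s1.mul_left 2)).add s0).congr
  intro n
  push_cast
  ring

private lemma st12_geom_M (ε : ℝ) (hε : 0 < ε) :
    ∃ M : ℝ, 2 ≤ M ∧ ∀ p : ℕ, 2 ≤ p → ∀ N : ℕ,
      ∑ n ∈ Finset.range N, ((n:ℝ)+1)^2 * ((p:ℝ)^(-ε))^n ≤ M := by
  set r := (2:ℝ)^(-ε) with hr
  have hr0 : (0:ℝ) ≤ r := (Real.rpow_pos_of_pos (by norm_num) _).le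
  have hr1 : r < 1 := Real.rpow_lt_one_of_one_lt_of_neg (by norm_num) (by linarith)
  have hsum := st12_summableM r hr0 hr1
  refine ⟨max (∑' n : ℕ, ((n:ℝ)+1)^2*r^n) 2, le_max_right _ _, ?_⟩
  intro p hp N
  have hp2 : (2:ℝ) ≤ (p:ℝ) := by exact_mod_cast hp
  have hpr : (p:ℝ)^(-ε) ≤ r := Real.rpow_le_rpow_of_nonpos (by norm_num) hp2 (by linarith)
  have hpr0 : (0:ℝ) ≤ (p:ℝ)^(-ε) := Real.rpow_nonneg (by positivity) _
  calc ∑ n ∈ Finset.range N, ((n:ℝ)+1)^2 * ((p:ℝ)^(-ε))^n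
      ≤ ∑ n ∈ Finset.range N, ((n:ℝ)+1)^2*r^n := by
        apply Finset.sum_le_sum
        intro n _
        exact mul_le_mul_of_nonneg_left (pow_le_pow_left₀ hpr0 hpr n) (by positivity)
    _ ≤ ∑' n : ℕ, ((n:ℝ)+1)^2*r^n := Summable.sum_le_tsum _ (fun n _ => by positivity) hsum
    _ ≤ max (∑' n : ℕ, ((n:ℝ)+1)^2*r^n) 2 := le_max_left _ _

private lemma st12_threshold (ε : ℝ) (hε : 0 < ε) :
    ∃ P₀ : ℕ, 1 ≤ P₀ ∧ ∀ p : ℕ, P₀ ≤ p → (p:ℝ)^(-ε) ≤ 1/8 := by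
  obtain ⟨P, hP⟩ := exists_nat_ge ((8:ℝ)^(1/ε))
  refine ⟨max P 1, le_max_right _ _, ?_⟩
  intro p hp
  have h8 : (8:ℝ)^(1/ε) ≤ (p:ℝ) := by
    refine le_trans hP ?_
    exact_mod_cast le_trans (le_max_left P 1) hp
  have h80 : (0:ℝ) < (8:ℝ)^(1/ε) := Real.rpow_pos_of_pos (by norm_num) _
  have h := Real.rpow_le_rpow_of_nonpos h80 h8 (neg_nonpos.mpr hε.le)
  have heq : ((8:ℝ)^(1/ε))^(-ε) = 1/8 := by
    rw [← Real.rpow_mul (by norm_num : (0:ℝ) ≤ 8)]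
    have hee : (1/ε)*(-ε) = -1 := by field_simp
    rw [hee, Real.rpow_neg_one]
    norm_num
  rw [heq] at h
  exact h

private lemma st12_prod_g_subset (ε : ℝ) (ℓ : ℕ) (S : Finset ℕ)
    (hsub : ℓ.primeFactors ⊆ S) :
    ∏ p ∈ ℓ.primeFactors, (((ℓ.factorization p : ℝ)+1)^2 * ((p:ℝ)^(-ε))^(ℓ.factorization p))
      = ∏ p ∈ S, (((ℓ.factorization p : ℝ)+1)^2 * ((p:ℝ)^(-ε))^(ℓ.factorization p)) := by
  apply Finset.prod_subset hsub
  intro p _ hnp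
  rw [← Nat.support_factorization] at hnp
  rw [Finsupp.notMem_support_iff.mp hnp]
  norm_num

/-- Let `γ₀ = log(3/2)/log 2 − 1/2`.  For every `0 < ε < γ₀` there is a
constant `C = C(ε) > 0` such that for every positive integer `L` and every real `Y ≥ 1`,
`∑_{ℓ > Y, ℓ ∣ L^∞} (ℓ^{1+ε} / ν(ℓ)²) (∑_{d ∣ ℓ} c_ℓ(d))² ≤ C · Y^{−2γ₀+2ε} · τ(L)`,
where the sum is over positive integers `ℓ > Y` all of whose prime factors divide `L`,
and `τ(L)` is the number of divisors of `L`. -/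
theorem stmt12 (ε : ℝ) (hε : 0 < ε) (hε' : ε < Real.log (3 / 2) / Real.log 2 - 1 / 2) :
    ∃ C : ℝ, 0 < C ∧ ∀ L : ℕ, 0 < L → ∀ Y : ℝ, 1 ≤ Y →
      (∑' ℓ : ℕ, if 0 < ℓ ∧ Y < (ℓ : ℝ) ∧ ℓ.primeFactors ⊆ L.primeFactors then
          ((ℓ : ℝ) ^ (1 + ε) / (nuCM ℓ : ℝ) ^ 2) * (∑ d ∈ ℓ.divisors, chebCoeffProd ℓ d) ^ 2
        else 0)
      ≤ C * Y ^ (-2 * (Real.log (3 / 2) / Real.log 2 - 1 / 2) + 2 * ε) *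
          (L.divisors.card : ℝ) := by
  classical
  obtain ⟨M, hM2, hMb⟩ := st12_geom_M ε hε
  obtain ⟨P₀, hP₀1, hP₀⟩ := st12_threshold ε hε
  have hM0 : (0:ℝ) < M := lt_of_lt_of_le two_pos hM2
  refine ⟨M ^ P₀, pow_pos hM0 P₀, ?_⟩
  intro L hL Y hY
  set δ := -2 * (Real.log (3 / 2) / Real.log 2 - 1 / 2) + 2 * ε with hδ
  have hδ0 : δ ≤ 0 := by rw [hδ]; linarith
  have hY0 : (0:ℝ) < Y := lt_of_lt_of_le one_pos hY
  set S := L.primeFactors with hS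
  set g : ℕ → ℕ → ℝ := fun p n => ((n:ℝ)+1)^2 * ((p:ℝ)^(-ε))^n with hg
  have hgnn : ∀ p n, 0 ≤ g p n := by
    intro p n
    have : (0:ℝ) ≤ (p:ℝ)^(-ε) := Real.rpow_nonneg (Nat.cast_nonneg p) _
    positivity
  have hg0 : ∀ p, g p 0 = 1 := by intro p; simp [hg]
  set B : ℕ → ℝ := fun p => if p < P₀ then M else 2 with hB
  have hBb : ∀ p ∈ S, ∀ N : ℕ, ∑ n ∈ Finset.range N, g p n ≤ B p := by
    intro p hp N
    have hprime := Nat.prime_of_mem_primeFactors hp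
    by_cases hcase : p < P₀
    · simp only [hB, if_pos hcase]
      exact hMb p hprime.two_le N
    · simp only [hB, if_neg hcase]
      exact st12_geom_small _ (Real.rpow_nonneg (Nat.cast_nonneg p) _)
        (hP₀ p (le_of_not_gt hcase)) N
  have hτnn : (0:ℝ) ≤ (L.divisors.card : ℝ) := Nat.cast_nonneg _
  have hYδnn : (0:ℝ) ≤ Y ^ δ := (Real.rpow_pos_of_pos hY0 δ).le
  -- bound on the product of B over S
  have hprodB : ∏ p ∈ S, B p ≤ M ^ P₀ * (L.divisors.card : ℝ) := by
    have h1 : ∏ p ∈ S, B p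
        = M ^ (S.filter (fun p => p < P₀)).card
          * 2 ^ (S.filter (fun p => ¬ p < P₀)).card := by
      rw [hB, Finset.prod_ite, Finset.prod_const, Finset.prod_const]
    have hc1 : (S.filter (fun p => p < P₀)).card ≤ P₀ := by
      have hsub : S.filter (fun p => p < P₀) ⊆ Finset.range P₀ := by
        intro p hp
        rw [Finset.mem_range]
        exact (Finset.mem_filter.mp hp).2
      calc (S.filter (fun p => p < P₀)).card ≤ (Finset.range P₀).card :=
            Finset.card_le_card hsub
        _ = P₀ := Finset.card_range P₀
    have h2 : M ^ (S.filter (fun p => p < P₀)).card ≤ M ^ P₀ :=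
      pow_le_pow_right₀ (by linarith) hc1
    have h3 : (2:ℝ) ^ (S.filter (fun p => ¬ p < P₀)).card ≤ 2 ^ S.card :=
      pow_le_pow_right₀ one_le_two (Finset.card_le_card (Finset.filter_subset _ _))
    have h4 : (2:ℝ) ^ S.card ≤ (L.divisors.card : ℝ) := by
      rw [Nat.card_divisors hL.ne']
      push_cast
      calc (2:ℝ) ^ S.card = ∏ _p ∈ S, (2:ℝ) := (Finset.prod_const _).symm
        _ ≤ ∏ p ∈ S, ((L.factorization p : ℝ) + 1) := by
            apply Finset.prod_le_prod (fun _ _ => by norm_num)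
            intro p hp
            have hpos : 1 ≤ L.factorization p := by
              have hp' := hp
              rw [hS, ← Nat.support_factorization] at hp'
              have := Finsupp.mem_support_iff.mp hp'
              omega
            have : (1:ℝ) ≤ (L.factorization p : ℝ) := by exact_mod_cast hpos
            linarith
    calc ∏ p ∈ S, B p
        = M ^ (S.filter (fun p => p < P₀)).card
          * 2 ^ (S.filter (fun p => ¬ p < P₀)).card := h1
      _ ≤ M ^ P₀ * (L.divisors.card : ℝ) := by
          apply mul_le_mul h2 (le_trans h3 h4) (by positivity) (by positivity)
  apply tsum_le_of_sum_le'
  · exact mul_nonneg (mul_nonneg (pow_pos hM0 P₀).le hYδnn) hτnn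
  · intro u
    have hpt : ∀ ℓ : ℕ,
        (if 0 < ℓ ∧ Y < (ℓ : ℝ) ∧ ℓ.primeFactors ⊆ S then
          ((ℓ : ℝ) ^ (1 + ε) / (nuCM ℓ : ℝ) ^ 2) * (∑ d ∈ ℓ.divisors, chebCoeffProd ℓ d) ^ 2
        else 0)
        ≤ Y ^ δ * (if 0 < ℓ ∧ ℓ.primeFactors ⊆ S then
            ∏ p ∈ S, g p (ℓ.factorization p) else 0) := by
      intro ℓ
      by_cases h : 0 < ℓ ∧ Y < (ℓ : ℝ) ∧ ℓ.primeFactors ⊆ S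
      · obtain ⟨hl, hYl, hsub⟩ := h
        rw [if_pos ⟨hl, hYl, hsub⟩, if_pos ⟨hl, hsub⟩]
        have h1 := st12_term_bound ε ℓ hl
        have h2 : (ℓ:ℝ) ^ δ ≤ Y ^ δ := Real.rpow_le_rpow_of_nonpos hY0 hYl.le hδ0
        have h4 : (0:ℝ) ≤ ∏ p ∈ ℓ.primeFactors,
            (((ℓ.factorization p : ℝ)+1)^2 * ((p:ℝ)^(-ε))^(ℓ.factorization p)) := by
          apply Finset.prod_nonneg
          intro p _
          exact hgnn p _
        calc ((ℓ : ℝ) ^ (1 + ε) / (nuCM ℓ : ℝ) ^ 2)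
              * (∑ d ∈ ℓ.divisors, chebCoeffProd ℓ d) ^ 2
            ≤ (ℓ:ℝ) ^ δ * ∏ p ∈ ℓ.primeFactors,
                (((ℓ.factorization p : ℝ)+1)^2 * ((p:ℝ)^(-ε))^(ℓ.factorization p)) := h1
          _ ≤ Y ^ δ * ∏ p ∈ ℓ.primeFactors,
                (((ℓ.factorization p : ℝ)+1)^2 * ((p:ℝ)^(-ε))^(ℓ.factorization p)) :=
              mul_le_mul_of_nonneg_right h2 h4
          _ = Y ^ δ * ∏ p ∈ S, g p (ℓ.factorization p) := by
              rw [st12_prod_g_subset ε ℓ S hsub]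
      · rw [if_neg h]
        by_cases h' : 0 < ℓ ∧ ℓ.primeFactors ⊆ S
        · rw [if_pos h']
          exact mul_nonneg hYδnn (Finset.prod_nonneg fun p _ => hgnn p _)
        · rw [if_neg h']
          simp
    calc ∑ ℓ ∈ u, (if 0 < ℓ ∧ Y < (ℓ : ℝ) ∧ ℓ.primeFactors ⊆ S then
          ((ℓ : ℝ) ^ (1 + ε) / (nuCM ℓ : ℝ) ^ 2) * (∑ d ∈ ℓ.divisors, chebCoeffProd ℓ d) ^ 2
        else 0)
        ≤ ∑ ℓ ∈ u, Y ^ δ * (if 0 < ℓ ∧ ℓ.primeFactors ⊆ S then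
            ∏ p ∈ S, g p (ℓ.factorization p) else 0) :=
          Finset.sum_le_sum fun ℓ _ => hpt ℓ
      _ = Y ^ δ * ∑ ℓ ∈ u, (if 0 < ℓ ∧ ℓ.primeFactors ⊆ S then
            ∏ p ∈ S, g p (ℓ.factorization p) else 0) := (Finset.mul_sum _ _ _).symm
      _ ≤ Y ^ δ * ∏ p ∈ S, B p :=
          mul_le_mul_of_nonneg_left (st12_euler S g hg0 hgnn B hBb u) hYδnn
      _ ≤ Y ^ δ * (M ^ P₀ * (L.divisors.card : ℝ)) :=
          mul_le_mul_of_nonneg_left hprodB hYδnn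
      _ = M ^ P₀ * Y ^ δ * (L.divisors.card : ℝ) := by ring
end
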